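/- If p is a real polynomial of degree at most r and |p(x)| ≤ Δ on [−ε,ε], then for all x with |x| ≥ ε, |p(x)| ≤ Δ · T_r(|x|/ε), where T_r is the r-th Chebyshev polynomial of the first kind. -/

import Mathlib

open Polynomial Finset Real



lemma natDegree_cheb_T_le : ∀ n : ℕ, (Polynomial.Chebyshev.T ℝ n).natDegree ≤ n := by
  intro n
  induction n using Nat.twoStepInduction with
  | zero => simp [Polynomial.Chebyshev.T_zero]
  | one => simp [Polynomial.Chebyshev.T_one]
  | more n ih1 ih2 =>
    have h : ((n + 2 : ℕ) : ℤ) = (n : ℤ) + 2 := by push_cast; ring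
    rw [h, Polynomial.Chebyshev.T_add_two]
    refine (natDegree_sub_le _ _).trans ?_
    have h1 : (2 * X * Polynomial.Chebyshev.T ℝ ((n:ℤ) + 1)).natDegree ≤ n + 2 := by
      refine (natDegree_mul_le).trans ?_
      have : ((n:ℤ) + 1) = ((n + 1 : ℕ) : ℤ) := by push_cast; ring
      rw [this]
      have := ih2
      have hX : (2 * X : ℝ[X]).natDegree ≤ 1 := by
        refine (natDegree_mul_le).trans ?_
        simp
      omega
    simp only [max_le_iff]
    exact ⟨h1, ih1.trans (by omega)⟩


lemma cheb_core (r : ℕ) (hr : 1 ≤ r) (q : ℝ[X]) (hdeg : q.natDegree ≤ r)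
    (Δ : ℝ) (hΔ : 0 ≤ Δ) (hb : ∀ y : ℝ, |y| ≤ 1 → |q.eval y| ≤ Δ)
    (t : ℝ) (ht : 1 ≤ t) :
    |q.eval t| ≤ Δ * (Polynomial.Chebyshev.T ℝ r).eval t := by
  have hrR : (0:ℝ) < r := by positivity
  set s : Finset ℕ := Finset.range (r+1) with hs
  set v : ℕ → ℝ := fun k => Real.cos (k * π / r) with hv
  have hmem : ∀ k ∈ s, (k:ℝ) * π / r ∈ Set.Icc 0 π := by
    intro k hk
    simp only [hs, Finset.mem_range] at hk
    constructor
    · positivity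
    · rw [div_le_iff₀ hrR]
      have : (k:ℝ) ≤ r := by exact_mod_cast Nat.lt_succ_iff.mp hk
      nlinarith [Real.pi_pos]
  have hanti : ∀ j ∈ s, ∀ k ∈ s, j < k → v k < v j := by
    intro j hj k hk hjk
    apply Real.strictAntiOn_cos (hmem j hj) (hmem k hk)
    have : (j:ℝ) < k := by exact_mod_cast hjk
    have hπ := Real.pi_pos
    have h2 : (j:ℝ) * π < (k:ℝ) * π := by nlinarith
    rw [div_eq_mul_inv, div_eq_mul_inv]
    exact mul_lt_mul_of_pos_right h2 (inv_pos.mpr hrR)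
  have hinj : Set.InjOn v s := by
    intro a ha b hb hab
    by_contra hne
    rcases Nat.lt_or_ge a b with h | h
    · exact absurd hab (ne_of_gt (hanti a ha b hb h))
    · have h' : b < a := by omega
      exact absurd hab (ne_of_lt (hanti b hb a ha h'))
  have hvle : ∀ k, v k ≤ 1 := fun k => Real.cos_le_one _
  have hvge : ∀ k, -1 ≤ v k := fun k => Real.neg_one_le_cos _
  have hcard : s.card = r + 1 := Finset.card_range _
  -- T values at nodes
  have hTnode : ∀ k, (Polynomial.Chebyshev.T ℝ r).eval (v k) = (-1:ℝ)^k := by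
    intro k
    have h1 : ((r:ℤ):ℝ) * ((k:ℝ) * π / r) = (k:ℝ) * π := by
      push_cast; field_simp
    rw [hv]
    simp only []
    rw [show ((r:ℤ) : ℤ) = (r:ℤ) from rfl]
    rw [Polynomial.Chebyshev.T_real_cos, h1]
    have := Real.cos_nat_mul_pi_sub 0 k
    simpa using this
  -- basis evaluation formula
  have hbasis : ∀ k, (Lagrange.basis s v k).eval t
      = ∏ j ∈ s.erase k, ((v k - v j)⁻¹ * (t - v j)) := by
    intro k
    simp [Lagrange.basis, Lagrange.basisDivisor, eval_prod]
  -- sign of basis at t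
  have hsign : ∀ k ∈ s, 0 ≤ (-1:ℝ)^k * (Lagrange.basis s v k).eval t := by
    intro k hk
    rw [hbasis]
    have hfilter : ((s.erase k).filter (fun j => j < k)) = Finset.range k := by
      have hk' : k < r + 1 := by simpa [hs] using hk
      ext j
      simp only [Finset.mem_filter, Finset.mem_erase, hs, Finset.mem_range]
      omega
    have hprodsign : ∏ j ∈ s.erase k, (if j < k then (-1:ℝ) else 1) = (-1:ℝ)^k := by
      rw [Finset.prod_ite, Finset.prod_const, Finset.prod_const, one_pow, mul_one, hfilter,
        Finset.card_range]
    have key : (-1:ℝ)^k * ∏ j ∈ s.erase k, ((v k - v j)⁻¹ * (t - v j))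
        = ∏ j ∈ s.erase k, ((if j < k then (-1:ℝ) else 1) * ((v k - v j)⁻¹ * (t - v j))) := by
      conv_rhs => rw [Finset.prod_mul_distrib]
      rw [hprodsign]
    rw [key]
    apply Finset.prod_nonneg
    intro j hj
    obtain ⟨hjk, hjs⟩ := Finset.mem_erase.mp hj
    have htj : 0 ≤ t - v j := by linarith [hvle j]
    rcases Nat.lt_or_ge j k with h | h
    · have : v k < v j := hanti j hjs k hk h
      have hinv : (v k - v j)⁻¹ ≤ 0 := inv_nonpos.mpr (by linarith)
      simp only [if_pos h]
      nlinarith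
    · have h' : k < j := by omega
      have : v j < v k := hanti k hk j hjs h'
      have hinv : 0 ≤ (v k - v j)⁻¹ := inv_nonneg.mpr (by linarith)
      simp only [if_neg (by omega : ¬ j < k)]
      positivity
  -- interpolation exactness for q
  have hqdeg : q.degree < s.card := by
    calc q.degree ≤ (q.natDegree : WithBot ℕ) := Polynomial.degree_le_natDegree
    _ < (s.card : WithBot ℕ) := by
        rw [hcard]; exact_mod_cast Nat.lt_succ_of_le hdeg
  have hTdeg : (Polynomial.Chebyshev.T ℝ r).degree < s.card := by
    calc (Polynomial.Chebyshev.T ℝ r).degree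
        ≤ ((Polynomial.Chebyshev.T ℝ r).natDegree : WithBot ℕ) := Polynomial.degree_le_natDegree
    _ < (s.card : WithBot ℕ) := by
        rw [hcard]
        exact_mod_cast Nat.lt_succ_of_le (natDegree_cheb_T_le r)
  have hq := Lagrange.eq_interpolate hinj hqdeg
  have hT := Lagrange.eq_interpolate hinj hTdeg
  -- evaluate both at t
  have hqt : q.eval t = ∑ k ∈ s, q.eval (v k) * (Lagrange.basis s v k).eval t := by
    conv_lhs => rw [hq]
    simp [Lagrange.interpolate_apply, eval_finset_sum]
  have hTt : (Polynomial.Chebyshev.T ℝ r).eval t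
      = ∑ k ∈ s, (-1:ℝ)^k * (Lagrange.basis s v k).eval t := by
    conv_lhs => rw [hT]
    simp only [Lagrange.interpolate_apply, eval_finset_sum, eval_mul, eval_C]
    exact Finset.sum_congr rfl fun k _ => by rw [hTnode k]
  rw [hqt, hTt, Finset.mul_sum]
  refine (Finset.abs_sum_le_sum_abs _ _).trans (Finset.sum_le_sum ?_)
  intro k hk
  have habs : |(Lagrange.basis s v k).eval t| = (-1:ℝ)^k * (Lagrange.basis s v k).eval t := by
    rcases Nat.even_or_odd k with he | ho
    · rw [he.neg_one_pow, one_mul, abs_of_nonneg]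
      have := hsign k hk; rwa [he.neg_one_pow, one_mul] at this
    · rw [ho.neg_one_pow, neg_one_mul, abs_of_nonpos]
      have := hsign k hk; rw [ho.neg_one_pow, neg_one_mul] at this; linarith
  rw [abs_mul, habs]
  have hqb : |q.eval (v k)| ≤ Δ := by
    apply hb
    rw [abs_le]; exact ⟨hvge k, hvle k⟩
  have hnn : 0 ≤ (-1:ℝ)^k * (Lagrange.basis s v k).eval t := hsign k hk
  calc |q.eval (v k)| * ((-1:ℝ)^k * (Lagrange.basis s v k).eval t)
      ≤ Δ * ((-1:ℝ)^k * (Lagrange.basis s v k).eval t) := by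
        apply mul_le_mul_of_nonneg_right hqb hnn
  _ = Δ * ((-1:ℝ)^k * (Lagrange.basis s v k).eval t) := rfl

/-- Chebyshev growth bound: if `p` is a real polynomial of degree at most `r` with
`|p(x)| ≤ Δ` on `[-ε, ε]` (with `ε > 0`), then for all `|x| ≥ ε` one has
`|p(x)| ≤ Δ · T_r(|x|/ε)`, where `T_r` is the `r`-th Chebyshev polynomial of the first kind. -/
theorem chebyshev_growth_bound (p : Polynomial ℝ) (r : ℕ) (hdeg : p.natDegree ≤ r)
    (Δ ε : ℝ) (hΔ : 0 ≤ Δ) (hε : 0 < ε)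
    (hbound : ∀ y : ℝ, |y| ≤ ε → |p.eval y| ≤ Δ)
    (x : ℝ) (hx : ε ≤ |x|) :
    |p.eval x| ≤ Δ * (Polynomial.Chebyshev.T ℝ r).eval (|x| / ε) := by
  rcases Nat.eq_zero_or_pos r with hr0 | hr
  · subst hr0
    have hp0 : p.natDegree = 0 := Nat.le_zero.mp hdeg
    have hpc : p = C (p.coeff 0) := Polynomial.eq_C_of_natDegree_eq_zero hp0
    have h0 : |p.eval 0| ≤ Δ := hbound 0 (by simp [le_of_lt hε])
    rw [hpc] at h0 ⊢
    simp only [eval_C] at h0 ⊢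
    simpa [Polynomial.Chebyshev.T_zero] using h0
  · set sgn : ℝ := if 0 ≤ x then 1 else -1 with hsgn
    have hsgnx : sgn * |x| = x := by
      rcases le_or_gt 0 x with h | h
      · rw [hsgn, if_pos h, one_mul, abs_of_nonneg h]
      · rw [hsgn, if_neg (not_le.mpr h), abs_of_neg h]; ring
    have hsgnabs : |sgn| = 1 := by
      rcases le_or_gt 0 x with h | h
      · rw [hsgn, if_pos h, abs_one]
      · rw [hsgn, if_neg (not_le.mpr h), abs_neg, abs_one]
    set q : Polynomial ℝ := p.comp (C (ε * sgn) * X) with hq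
    have hlin : (C (ε * sgn) * X : Polynomial ℝ).natDegree ≤ 1 := by
      refine (natDegree_mul_le).trans ?_
      rw [natDegree_C, natDegree_X]
    have hqdeg : q.natDegree ≤ r := by
      rw [hq, natDegree_comp]
      calc p.natDegree * (C (ε * sgn) * X : Polynomial ℝ).natDegree
          ≤ r * 1 := Nat.mul_le_mul hdeg hlin
      _ = r := mul_one r
    have hqb : ∀ y : ℝ, |y| ≤ 1 → |q.eval y| ≤ Δ := by
      intro y hy
      rw [hq]
      simp only [eval_comp, eval_mul, eval_C, eval_X]
      apply hbound
      rw [abs_mul, abs_mul, hsgnabs, mul_one, abs_of_pos hε]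
      calc ε * |y| ≤ ε * 1 := by
            exact mul_le_mul_of_nonneg_left hy (le_of_lt hε)
      _ = ε := mul_one ε
    have ht : 1 ≤ |x| / ε := (one_le_div hε).mpr hx
    have hmain := cheb_core r hr q hqdeg Δ hΔ hqb (|x| / ε) ht
    have hqt : q.eval (|x| / ε) = p.eval x := by
      rw [hq]
      simp only [eval_comp, eval_mul, eval_C, eval_X]
      rw [show ε * sgn * (|x| / ε) = sgn * |x| by field_simp, hsgnx]
    rwa [hqt] at hmain
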